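/- Let R be a ring and x ∈ R an element that is not a left zero-divisor. If J and K are right ideals of R with J ⊆ xR, then x⁻¹(J + K) = x⁻¹J + x⁻¹K. -/
import Mathlib

/-- Let `x ∈ R` be no left zero-divisor.  If `J`, `K` are right ideals of `R`
with `J ⊆ xR`, then `x⁻¹(J + K) = x⁻¹J + x⁻¹K`; membership of `r` in the sum
of the right ideals `x⁻¹J` and `x⁻¹K` is spelled out elementwise. -/
theorem stmt6 (R : Type*) [Ring R] (x : R) (hx : ∀ r : R, x * r = 0 → r = 0)
    (J K : Submodule Rᵐᵒᵖ R) (hJ : J ≤ Submodule.span Rᵐᵒᵖ ({x} : Set R)) :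
    ∀ r : R, x * r ∈ J ⊔ K ↔ ∃ j k : R, x * j ∈ J ∧ x * k ∈ K ∧ r = j + k := by
  intro r
  constructor
  · intro h
    rw [Submodule.mem_sup] at h
    obtain ⟨a, ha, b, hb, hab⟩ := h
    obtain ⟨c, hc⟩ := Submodule.mem_span_singleton.mp (hJ ha)
    have hc' : a = x * c.unop := by
      rw [← hc]; rfl
    refine ⟨c.unop, r - c.unop, ?_, ?_, by abel⟩
    · rwa [← hc']
    · have : x * (r - c.unop) = b := by
        rw [mul_sub, ← hc', ← hab]; abel
      rwa [this]
  · rintro ⟨j, k, hj, hk, rfl⟩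
    rw [mul_add]
    exact Submodule.add_mem_sup hj hk
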